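/- (Orthogonal Procrustes problem.) Let M be an n×n complex matrix with singular value decomposition M = U * Matrix.diagonal (fun i => (σ i : ℂ)) * Vᴴ, where U and V are unitary and σ i ≥ 0 for all i. Define X := U * Vᴴ. Then Xᴴ * X = 1, and for every n×n complex matrix Z with Zᴴ * Z = 1 one has ‖X − M‖_F ≤ ‖Z − M‖_F. -/

import Mathlib

open Matrix

/-- Frobenius norm of a complex matrix. -/
noncomputable def frobNorm {n : ℕ} (A : Matrix (Fin n) (Fin n) ℂ) : ℝ :=
  Real.sqrt (∑ i, ∑ j, ‖A i j‖ ^ 2)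

lemma re_star_mul (z : ℂ) : (star z * z).re = ‖z‖ ^ 2 := by
  rw [show (star z : ℂ) = (starRingEnd ℂ) z from rfl, mul_comm, Complex.mul_conj]
  simp [Complex.sq_norm]

lemma sumSq_eq_trace {n : ℕ} (A : Matrix (Fin n) (Fin n) ℂ) :
    ∑ i, ∑ j, ‖A i j‖ ^ 2 = (Matrix.trace (Aᴴ * A)).re := by
  rw [Matrix.trace]
  simp only [Matrix.diag, Matrix.mul_apply, Matrix.conjTranspose_apply]
  rw [Complex.re_sum]
  rw [Finset.sum_comm]
  refine Finset.sum_congr rfl fun i _ => ?_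
  rw [Complex.re_sum]
  refine Finset.sum_congr rfl fun j _ => ?_
  exact (re_star_mul _).symm

lemma trace_expand {n : ℕ} (Z M : Matrix (Fin n) (Fin n) ℂ) :
    (Matrix.trace ((Z - M)ᴴ * (Z - M))).re =
      (Matrix.trace (Zᴴ * Z)).re + (Matrix.trace (Mᴴ * M)).re
        - 2 * (Matrix.trace (Zᴴ * M)).re := by
  have h1 : (Z - M)ᴴ * (Z - M) = Zᴴ * Z - Zᴴ * M - Mᴴ * Z + Mᴴ * M := by
    rw [Matrix.conjTranspose_sub]
    noncomm_ring
  have h2 : (Matrix.trace (Mᴴ * Z)).re = (Matrix.trace (Zᴴ * M)).re := by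
    have : Mᴴ * Z = (Zᴴ * M)ᴴ := by simp [Matrix.conjTranspose_mul]
    rw [this, Matrix.trace_conjTranspose]
    simp
  rw [h1]
  simp only [Matrix.trace_add, Matrix.trace_sub, Complex.add_re, Complex.sub_re]
  rw [h2]
  ring

/-- **Orthogonal Procrustes problem.** If `M = U * diagonal σ * Vᴴ` is an SVD of `M`,
then `X := U * Vᴴ` satisfies `Xᴴ * X = 1` and minimizes the Frobenius distance to `M`
over all matrices `Z` with `Zᴴ * Z = 1`. -/
theorem stmt_14 {n : ℕ} (M U V : Matrix (Fin n) (Fin n) ℂ) (σ : Fin n → ℝ)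
    (hU : Uᴴ * U = 1) (hV : Vᴴ * V = 1) (hσ : ∀ i, 0 ≤ σ i)
    (hM : M = U * Matrix.diagonal (fun i => (σ i : ℂ)) * Vᴴ) :
    (U * Vᴴ)ᴴ * (U * Vᴴ) = 1 ∧
      ∀ Z : Matrix (Fin n) (Fin n) ℂ, Zᴴ * Z = 1 →
        frobNorm (U * Vᴴ - M) ≤ frobNorm (Z - M) := by
  have hVV : V * Vᴴ = 1 := mul_eq_one_comm.mp hV
  have hUU : U * Uᴴ = 1 := mul_eq_one_comm.mp hU
  have hX : (U * Vᴴ)ᴴ * (U * Vᴴ) = 1 := by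
    calc (U * Vᴴ)ᴴ * (U * Vᴴ) = V * (Uᴴ * U) * Vᴴ := by
          simp [Matrix.conjTranspose_mul, Matrix.mul_assoc]
      _ = 1 := by rw [hU]; simp [hVV]
  refine ⟨hX, fun Z hZ => ?_⟩
  -- trace of Zᴴ M in terms of W = Vᴴ Zᴴ U
  have key : ∀ Z : Matrix (Fin n) (Fin n) ℂ,
      Matrix.trace (Zᴴ * M) = ∑ i, (Vᴴ * Zᴴ * U) i i * (σ i : ℂ) := by
    intro Y
    rw [hM, show Yᴴ * (U * Matrix.diagonal (fun i => (σ i : ℂ)) * Vᴴ)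
        = (Yᴴ * U * Matrix.diagonal (fun i => (σ i : ℂ))) * Vᴴ by
      simp [Matrix.mul_assoc]]
    rw [Matrix.trace_mul_comm, Matrix.trace]
    simp only [Matrix.diag]
    refine Finset.sum_congr rfl fun i _ => ?_
    rw [show Vᴴ * (Yᴴ * U * Matrix.diagonal (fun i => (σ i : ℂ)))
        = (Vᴴ * Yᴴ * U) * Matrix.diagonal (fun i => (σ i : ℂ)) by
      simp [Matrix.mul_assoc]]
    rw [Matrix.mul_diagonal]
  -- for any unitary Z, Re trace(Zᴴ M) ≤ ∑ σ i
  have bound : ∀ Z : Matrix (Fin n) (Fin n) ℂ, Zᴴ * Z = 1 →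
      (Matrix.trace (Zᴴ * M)).re ≤ ∑ i, σ i := by
    intro Y hY
    have hYY : Y * Yᴴ = 1 := mul_eq_one_comm.mp hY
    set W := Vᴴ * Yᴴ * U with hWdef
    have hW : Wᴴ * W = 1 := by
      calc Wᴴ * W = Uᴴ * (Y * ((V * Vᴴ) * (Yᴴ * U))) := by
            simp [hWdef, Matrix.conjTranspose_mul, Matrix.mul_assoc]
        _ = 1 := by rw [hVV]; simp [Matrix.mul_assoc, ← Matrix.mul_assoc Y Yᴴ, hYY, hU]
    have habs : ∀ i, ‖W i i‖ ≤ 1 := by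
      intro i
      have hcol : ∑ j, ‖W j i‖ ^ 2 = 1 := by
        have h1 : (Wᴴ * W) i i = 1 := by rw [hW]; simp
        have : ((Wᴴ * W) i i).re = 1 := by rw [h1]; simp
        rw [Matrix.mul_apply] at this
        rw [← this, Complex.re_sum]
        refine Finset.sum_congr rfl fun j _ => ?_
        rw [Matrix.conjTranspose_apply]
        exact (re_star_mul _).symm
      have hle : ‖W i i‖ ^ 2 ≤ 1 := by
        rw [← hcol]
        exact Finset.single_le_sum (f := fun j => ‖W j i‖ ^ 2) (fun j _ => sq_nonneg _) (Finset.mem_univ i)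
      nlinarith [norm_nonneg (W i i)]
    rw [key Y, Complex.re_sum]
    refine Finset.sum_le_sum fun i _ => ?_
    have : ((W i i) * (σ i : ℂ)).re = (W i i).re * σ i := by
      simp [Complex.mul_re]
    rw [this]
    have h1 : (W i i).re ≤ 1 := le_trans (Complex.re_le_norm _) (habs i)
    nlinarith [hσ i]
  -- equality for X = U Vᴴ
  have eqX : (Matrix.trace ((U * Vᴴ)ᴴ * M)).re = ∑ i, σ i := by
    have hW1 : Vᴴ * (U * Vᴴ)ᴴ * U = 1 := by
      calc Vᴴ * (U * Vᴴ)ᴴ * U = Vᴴ * (V * (Uᴴ * U)) := by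
            simp [Matrix.conjTranspose_mul, Matrix.mul_assoc]
        _ = 1 := by rw [hU]; simp [hV]
    rw [key (U * Vᴴ), hW1]
    simp [Complex.re_sum]
  -- conclude
  have hXnorm : (Matrix.trace ((U * Vᴴ)ᴴ * (U * Vᴴ))).re = n := by
    rw [hX]; simp [Matrix.trace_one]
  have hZnorm : (Matrix.trace (Zᴴ * Z)).re = n := by
    rw [hZ]; simp [Matrix.trace_one]
  apply Real.sqrt_le_sqrt
  rw [sumSq_eq_trace, sumSq_eq_trace, trace_expand, trace_expand, hXnorm, hZnorm, eqX]
  have := bound Z hZ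
  linarith
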